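/- Define A(ρ,m) for ρ > 0, u = m/ρ, θ = (γ−1)/2, l = (3−γ)/(2(γ−1)), g(ξ) = |ξ|^{2γ/(γ−1)}, by A(ρ,m) = ρ ∫_{−1}^{1} [g(u + zρ^θ) − g(zρ^θ) − g′(zρ^θ)u − ½ g″(zρ^θ)u²](1 − z²)^l dz. Then A(ρ,m) ≥ 0 for all ρ > 0 and m ∈ ℝ. -/

import Mathlib

open MeasureTheory

noncomputable def Gfun (p : ℝ) (x : ℝ) : ℝ := (x ^ 2) ^ (p / 2)
noncomputable def Gfun1 (p : ℝ) (x : ℝ) : ℝ := p * x * (x ^ 2) ^ ((p - 2) / 2)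
noncomputable def Gfun2 (p : ℝ) (x : ℝ) : ℝ := p * (p - 1) * (x ^ 2) ^ ((p - 2) / 2)

lemma sq_rpow_half (x r : ℝ) : (x ^ 2) ^ (r / 2) = |x| ^ r := by
  rw [← sq_abs x, ← Real.rpow_natCast |x| 2, ← Real.rpow_mul (abs_nonneg x)]
  norm_num
  congr 1
  ring

lemma cont_sq_rpow (q : ℝ) (hq : 0 ≤ q) : Continuous fun x : ℝ => (x ^ 2) ^ q :=
  (Real.continuous_rpow_const hq).comp (continuous_pow 2)

lemma Gfun_even (p a : ℝ) : Gfun p (-a) = Gfun p a := by simp [Gfun]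
lemma Gfun1_odd (p a : ℝ) : Gfun1 p (-a) = - Gfun1 p a := by simp [Gfun1]
lemma Gfun2_even (p a : ℝ) : Gfun2 p (-a) = Gfun2 p a := by simp [Gfun2]

lemma hasDerivAt_Gfun (p : ℝ) (hp : 2 ≤ p) (x : ℝ) :
    HasDerivAt (Gfun p) (Gfun1 p x) x := by
  have h1 : HasDerivAt (fun y : ℝ => y ^ 2) (2 * x) x := by
    simpa using hasDerivAt_pow 2 x
  have h2 := h1.rpow_const (p := p / 2) (Or.inr (by linarith))
  have he : Gfun1 p x = 2 * x * (p / 2) * (x ^ 2) ^ (p / 2 - 1) := by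
    unfold Gfun1
    rw [show p / 2 - 1 = (p - 2) / 2 by ring]
    ring
  rw [he]
  exact h2

lemma hasDerivAt_Gfun1 (p : ℝ) (hp : 3 < p) (x : ℝ) :
    HasDerivAt (Gfun1 p) (Gfun2 p x) x := by
  have hq0 : (0:ℝ) < (p - 2) / 2 := by linarith
  rcases eq_or_ne x 0 with rfl | hx
  · have hzero : ((0:ℝ) ^ 2) ^ ((p - 2) / 2) = 0 := by
      rw [show ((0:ℝ) ^ 2) = 0 by norm_num]
      exact Real.zero_rpow (ne_of_gt hq0)
    have h0 : Gfun2 p 0 = 0 := by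
      unfold Gfun2
      rw [hzero, mul_zero]
    rw [h0, hasDerivAt_iff_tendsto_slope]
    have hc : Continuous fun y : ℝ => p * (y ^ 2) ^ ((p - 2) / 2) :=
      continuous_const.mul (cont_sq_rpow _ hq0.le)
    have hlim : Filter.Tendsto (fun y : ℝ => p * (y ^ 2) ^ ((p - 2) / 2))
        (nhdsWithin 0 {(0:ℝ)}ᶜ) (nhds 0) := by
      have h := hc.tendsto 0
      rw [show p * ((0:ℝ) ^ 2) ^ ((p - 2) / 2) = 0 by rw [hzero]; ring] at h
      exact h.mono_left nhdsWithin_le_nhds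
    refine hlim.congr' ?_
    filter_upwards [self_mem_nhdsWithin] with y hy
    have hy' : (y:ℝ) ≠ 0 := hy
    rw [slope_def_field]
    unfold Gfun1
    field_simp
    ring
  · have hx2 : (0:ℝ) < x ^ 2 := by positivity
    have h1 : HasDerivAt (fun y : ℝ => y ^ 2) (2 * x) x := by
      simpa using hasDerivAt_pow 2 x
    have h3 := h1.rpow_const (p := (p - 2) / 2) (Or.inl (ne_of_gt hx2))
    have h4 := ((hasDerivAt_id x).mul h3).const_mul p
    have hsplit : (x ^ 2) ^ ((p - 2) / 2) = x ^ 2 * (x ^ 2) ^ ((p - 2) / 2 - 1) := by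
      calc (x ^ 2) ^ ((p - 2) / 2) = (x ^ 2) ^ ((1:ℝ) + ((p - 2) / 2 - 1)) := by norm_num
        _ = (x ^ 2) ^ (1:ℝ) * (x ^ 2) ^ ((p - 2) / 2 - 1) := Real.rpow_add hx2 _ _
        _ = x ^ 2 * (x ^ 2) ^ ((p - 2) / 2 - 1) := by rw [Real.rpow_one]
    have he : Gfun2 p x =
        p * (1 * (x ^ 2) ^ ((p - 2) / 2) + id x * (2 * x * ((p - 2) / 2) * (x ^ 2) ^ ((p - 2) / 2 - 1))) := by
      unfold Gfun2
      rw [hsplit]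
      simp only [id]
      ring
    rw [he]
    apply h4.congr_of_eventuallyEq
    filter_upwards with y
    unfold Gfun1
    simp only [Pi.mul_apply, id]
    ring

lemma Gfun2_mid (p : ℝ) (hp : 3 < p) (a t : ℝ) :
    2 * Gfun2 p a ≤ Gfun2 p (a + t) + Gfun2 p (a - t) := by
  have hr : (1:ℝ) ≤ p - 2 := by linarith
  have habs : ∀ x : ℝ, Gfun2 p x = p * (p - 1) * |x| ^ (p - 2) := by
    intro x
    unfold Gfun2
    rw [sq_rpow_half]
  rw [habs, habs, habs]
  have hA : |a| ≤ (|a + t| + |a - t|) / 2 := by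
    have h := abs_add_le (a + t) (a - t)
    rw [show (a + t) + (a - t) = 2 * a by ring, abs_mul, abs_two] at h
    linarith
  have h1 : |a| ^ (p - 2) ≤ ((|a + t| + |a - t|) / 2) ^ (p - 2) :=
    Real.rpow_le_rpow (abs_nonneg a) hA (by linarith)
  have h2 : ((|a + t| + |a - t|) / 2) ^ (p - 2) ≤
      (|a + t| ^ (p - 2) + |a - t| ^ (p - 2)) / 2 := by
    have hc := (convexOn_rpow hr).2 (Set.mem_Ici.2 (abs_nonneg (a + t)))
      (Set.mem_Ici.2 (abs_nonneg (a - t))) (by norm_num : (0:ℝ) ≤ 1/2)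
      (by norm_num : (0:ℝ) ≤ 1/2) (by norm_num)
    simp only [smul_eq_mul] at hc
    calc ((|a + t| + |a - t|) / 2) ^ (p - 2)
        = (1/2 * |a + t| + 1/2 * |a - t|) ^ (p - 2) := by ring_nf
      _ ≤ 1/2 * |a + t| ^ (p - 2) + 1/2 * |a - t| ^ (p - 2) := hc
      _ = (|a + t| ^ (p - 2) + |a - t| ^ (p - 2)) / 2 := by ring
  have hpp : (0:ℝ) ≤ p * (p - 1) := by nlinarith
  nlinarith [mul_le_mul_of_nonneg_left (le_trans h1 h2) hpp]

lemma key_half (p : ℝ) (hp : 3 < p) (a u : ℝ) (hu : 0 ≤ u) :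
    0 ≤ Gfun p (a + u) + Gfun p (a - u) - 2 * Gfun p a - Gfun2 p a * u ^ 2 := by
  set H : ℝ → ℝ := fun t => Gfun p (a + t) + Gfun p (a - t) - 2 * Gfun p a - Gfun2 p a * t ^ 2
    with hH
  set H1 : ℝ → ℝ := fun t => Gfun1 p (a + t) - Gfun1 p (a - t) - 2 * Gfun2 p a * t with hH1
  have hp2 : (2:ℝ) ≤ p := by linarith
  have hdH : ∀ t, HasDerivAt H (H1 t) t := by
    intro t
    have h1 : HasDerivAt (fun t : ℝ => Gfun p (a + t)) (Gfun1 p (a + t)) t := by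
      simpa [Function.comp_def] using (hasDerivAt_Gfun p hp2 (a + t)).comp t ((hasDerivAt_id t).const_add a)
    have h2 : HasDerivAt (fun t : ℝ => Gfun p (a - t)) (-Gfun1 p (a - t)) t := by
      simpa [Function.comp_def] using (hasDerivAt_Gfun p hp2 (a - t)).comp t ((hasDerivAt_id t).const_sub a)
    have h3 : HasDerivAt (fun t : ℝ => Gfun2 p a * t ^ 2) (Gfun2 p a * (2 * t)) t := by
      simpa using ((hasDerivAt_pow 2 t).const_mul (Gfun2 p a))
    have h := ((h1.add h2).sub_const (2 * Gfun p a)).sub h3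
    refine h.congr_deriv ?_
    simp only [hH1]
    ring
  have hdH1 : ∀ t, HasDerivAt H1 (Gfun2 p (a + t) + Gfun2 p (a - t) - 2 * Gfun2 p a) t := by
    intro t
    have h1 : HasDerivAt (fun t : ℝ => Gfun1 p (a + t)) (Gfun2 p (a + t)) t := by
      simpa [Function.comp_def] using (hasDerivAt_Gfun1 p hp (a + t)).comp t ((hasDerivAt_id t).const_add a)
    have h2 : HasDerivAt (fun t : ℝ => Gfun1 p (a - t)) (-Gfun2 p (a - t)) t := by
      simpa [Function.comp_def] using (hasDerivAt_Gfun1 p hp (a - t)).comp t ((hasDerivAt_id t).const_sub a)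
    have h3 : HasDerivAt (fun t : ℝ => 2 * Gfun2 p a * t) (2 * Gfun2 p a) t := by
      simpa using (hasDerivAt_id t).const_mul (2 * Gfun2 p a)
    have h := (h1.sub h2).sub h3
    refine h.congr_deriv ?_
    ring
  have hH1mono : Monotone H1 :=
    monotone_of_hasDerivAt_nonneg hdH1 (fun t => by
      have := Gfun2_mid p hp a t
      simp only [Pi.zero_apply]
      linarith)
  have hH10 : H1 0 = 0 := by simp [hH1]
  have hH1nonneg : ∀ t, 0 ≤ t → 0 ≤ H1 t := fun t ht => hH10 ▸ hH1mono ht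
  have hHmono : MonotoneOn H (Set.Icc 0 u) := by
    apply monotoneOn_of_hasDerivWithinAt_nonneg (convex_Icc 0 u)
      (fun t _ => (hdH t).continuousAt.continuousWithinAt)
      (fun t _ => (hdH t).hasDerivWithinAt)
    intro t ht
    rw [interior_Icc] at ht
    exact hH1nonneg t ht.1.le
  have hH0 : H 0 = 0 := by
    simp [hH]
    ring
  have hfin := hHmono (Set.left_mem_Icc.2 hu) (Set.mem_Icc.2 ⟨hu, le_refl u⟩) hu
  rw [hH0] at hfin
  exact hfin

lemma key (p : ℝ) (hp : 3 < p) (a u : ℝ) :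
    0 ≤ Gfun p (a + u) + Gfun p (a - u) - 2 * Gfun p a - Gfun2 p a * u ^ 2 := by
  rcases le_total 0 u with hu | hu
  · exact key_half p hp a u hu
  · have h := key_half p hp a (-u) (by linarith)
    rw [sub_neg_eq_add, ← sub_eq_add_neg, neg_sq] at h
    linarith

theorem A_nonneg (γ θ l : ℝ) (hγ1 : 1 < γ) (hγ3 : γ < 3)
    (hθ : θ = (γ - 1) / 2) (hl : l = (3 - γ) / (2 * (γ - 1)))
    (g : ℝ → ℝ) (hg : ∀ ξ : ℝ, g ξ = |ξ| ^ (2 * γ / (γ - 1)))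
    (Afun : ℝ → ℝ → ℝ)
    (hA : ∀ ρ m : ℝ, Afun ρ m = ρ * ∫ z in (-1 : ℝ)..1,
      (g (m / ρ + z * ρ ^ θ) - g (z * ρ ^ θ) - deriv g (z * ρ ^ θ) * (m / ρ)
        - (1 / 2) * deriv (deriv g) (z * ρ ^ θ) * (m / ρ) ^ 2) * (1 - z ^ 2) ^ l) :
    ∀ ρ m : ℝ, 0 < ρ → 0 ≤ Afun ρ m := by
  intro ρ m hρ
  set p : ℝ := 2 * γ / (γ - 1) with hpdef
  have hγ1' : (0:ℝ) < γ - 1 := by linarith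
  have hp3 : 3 < p := by
    rw [hpdef, lt_div_iff₀ hγ1']
    nlinarith
  have hp2 : (2:ℝ) ≤ p := by linarith
  have hgG : g = Gfun p := by
    funext x
    rw [hg, Gfun, sq_rpow_half]
  have hdg : deriv g = Gfun1 p := by
    rw [hgG]
    funext x
    exact (hasDerivAt_Gfun p hp2 x).deriv
  have hd2g : deriv (deriv g) = Gfun2 p := by
    rw [hdg]
    funext x
    exact (hasDerivAt_Gfun1 p hp3 x).deriv
  have hl0 : 0 ≤ l := by
    rw [hl]
    apply div_nonneg (by linarith) (by linarith)
  rw [hA, hd2g, hdg, hgG]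
  set u : ℝ := m / ρ with hu
  set F : ℝ → ℝ := fun z =>
    (Gfun p (u + z * ρ ^ θ) - Gfun p (z * ρ ^ θ) - Gfun1 p (z * ρ ^ θ) * u
      - 1 / 2 * Gfun2 p (z * ρ ^ θ) * u ^ 2) * (1 - z ^ 2) ^ l with hF
  have hcontG : Continuous (Gfun p) := by
    unfold Gfun
    exact cont_sq_rpow _ (by linarith)
  have hcontG1 : Continuous (Gfun1 p) := by
    unfold Gfun1
    exact (continuous_const.mul continuous_id).mul (cont_sq_rpow _ (by linarith))
  have hcontG2 : Continuous (Gfun2 p) := by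
    unfold Gfun2
    exact continuous_const.mul (cont_sq_rpow _ (by linarith))
  have hcontw : Continuous fun z : ℝ => (1 - z ^ 2) ^ l :=
    (Real.continuous_rpow_const hl0).comp (continuous_const.sub (continuous_pow 2))
  have hcontF : Continuous F := by
    rw [hF]
    apply Continuous.mul _ hcontw
    have hca : Continuous fun z : ℝ => z * ρ ^ θ := continuous_id.mul continuous_const
    exact (((hcontG.comp (continuous_const.add hca)).sub (hcontG.comp hca)).sub
      ((hcontG1.comp hca).mul continuous_const)).sub
      ((continuous_const.mul (hcontG2.comp hca)).mul continuous_const)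
  apply mul_nonneg hρ.le
  have hneg : (∫ z in (-1:ℝ)..1, F (-z)) = ∫ z in (-1:ℝ)..1, F z := by
    have h := intervalIntegral.integral_comp_neg (a := (-1:ℝ)) (b := 1) (f := F)
    simpa using h
  have hsum : 0 ≤ ∫ z in (-1:ℝ)..1, (F z + F (-z)) := by
    apply intervalIntegral.integral_nonneg (by norm_num)
    intro z hz
    have hz2 : z ^ 2 ≤ 1 := by
      rcases Set.mem_Icc.1 hz with ⟨h1, h2⟩
      nlinarith
    have hw : 0 ≤ (1 - z ^ 2) ^ l := Real.rpow_nonneg (by linarith) l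
    simp only [hF]
    rw [show -z * ρ ^ θ = -(z * ρ ^ θ) by ring, neg_sq]
    set a : ℝ := z * ρ ^ θ with ha
    rw [Gfun_even, Gfun1_odd, Gfun2_even]
    have h2 : Gfun p (u + a) = Gfun p (a + u) := by rw [add_comm]
    have h3 : Gfun p (u + -a) = Gfun p (a - u) := by
      rw [← Gfun_even p (u + -a)]
      congr 1
      ring
    rw [h2, h3]
    nlinarith [mul_nonneg (key p hp3 a u) hw]
  have hint2 : IntervalIntegrable (fun z => F (-z)) volume (-1) 1 :=
    (hcontF.comp continuous_neg).intervalIntegrable _ _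
  rw [intervalIntegral.integral_add (hcontF.intervalIntegrable _ _) hint2, hneg] at hsum
  show (0:ℝ) ≤ ∫ z in (-1:ℝ)..1, F z
  linarith
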